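/- For every fixed positive integer h there is a constant C = C(h) such that for all positive integers k, the k-th positive element of the greedy B_h-set satisfies γ_k(h) ≤ k^{2h−1}/(h!·(h−1)!) + C·k^{2h−2}. -/

import Mathlib

/-- A set `A` of nonnegative integers is a `B_h`-set if every solution to
`a_1 + ... + a_h = b_1 + ... + b_h` with all `a_i, b_i ∈ A` has
`{a_1, ..., a_h} = {b_1, ..., b_h}` as multisets. -/
def IsBhSet (h : ℕ) (A : Set ℕ) : Prop :=
  ∀ a b : Fin h → ℕ, (∀ i, a i ∈ A) → (∀ i, b i ∈ A) →
    (∑ i, a i) = (∑ i, b i) →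
    Multiset.map a Finset.univ.val = Multiset.map b Finset.univ.val

/-- Auxiliary construction of the greedy `B_h`-set: `greedyAux h k` is the pair
consisting of the `k`-th element `γ_k(h)` of the greedy `B_h`-set together with
the finite set `{γ_0(h), ..., γ_k(h)}`.  We have `γ_0(h) = 0`, `γ_1(h) = 1`, and
for `k ≥ 1`, `γ_{k+1}(h)` is the smallest integer greater than `γ_k(h)` such
that `{γ_0(h), ..., γ_k(h), γ_{k+1}(h)}` is a `B_h`-set. -/
noncomputable def greedyAux (h : ℕ) : ℕ → ℕ × Finset ℕ
  | 0 => (0, {0})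
  | (k + 1) =>
    let p := greedyAux h k
    let g := if k = 0 then 1
      else sInf {x : ℕ | p.1 < x ∧ IsBhSet h ((insert x p.2 : Finset ℕ) : Set ℕ)}
    (g, insert g p.2)

/-- `greedy h k` is the `k`-th element `γ_k(h)` of the greedy `B_h`-set. -/
noncomputable def greedy (h k : ℕ) : ℕ := (greedyAux h k).1

noncomputable def PJL (h : ℕ) : Finset (ℕ × ℕ) :=
  ((Finset.range (h+1)) ×ˢ (Finset.range (h+1))).filter (fun p => p.2 < p.1)

noncomputable def BRep (h : ℕ) (A : Finset ℕ) (p : ℕ × ℕ) : Finset ℕ :=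
  Finset.image
    (fun st : Sym {x // x ∈ A} (h - p.1) × Sym {x // x ∈ A} (h - p.2) =>
      ((Multiset.map Subtype.val (st.2 : Multiset {x // x ∈ A})).sum
        - (Multiset.map Subtype.val (st.1 : Multiset {x // x ∈ A})).sum) / (p.1 - p.2))
    Finset.univ

lemma sum_eq_msum {h : ℕ} (f : Fin h → ℕ) :
    (∑ i, f i) = (Multiset.map f Finset.univ.val).sum := rfl

lemma map_univ_eq (s : Multiset ℕ) {h : ℕ} (hs : Multiset.card s = h) :
    Multiset.map (fun i : Fin h => s.toList.get
      (Fin.cast (by rw [Multiset.length_toList, hs]) i)) Finset.univ.val = s := by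
  rw [Fin.univ_val_map]
  rw [← List.ofFn_congr (by rw [Multiset.length_toList, hs]) s.toList.get]
  rw [List.ofFn_get]
  exact s.coe_toList

lemma isBhSet_iff (h : ℕ) (A : Set ℕ) : IsBhSet h A ↔
    ∀ s t : Multiset ℕ, Multiset.card s = h → Multiset.card t = h →
      (∀ x ∈ s, x ∈ A) → (∀ x ∈ t, x ∈ A) → s.sum = t.sum → s = t := by
  constructor
  · intro H s t hs ht hsA htA hsum
    have h1 := map_univ_eq s hs
    have h2 := map_univ_eq t ht
    rw [← h1, ← h2]
    apply H
    · intro i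
      exact hsA _ (Multiset.mem_toList.mp (s.toList.get_mem _))
    · intro i
      exact htA _ (Multiset.mem_toList.mp (t.toList.get_mem _))
    · rw [sum_eq_msum, sum_eq_msum, h1, h2]
      exact hsum
  · intro H a b haA hbA hsum
    apply H
    · simp
    · simp
    · intro x hx
      obtain ⟨i, _, rfl⟩ := Multiset.mem_map.mp hx
      exact haA i
    · intro x hx
      obtain ⟨i, _, rfl⟩ := Multiset.mem_map.mp hx
      exact hbA i
    · rw [← sum_eq_msum, ← sum_eq_msum]
      exact hsum

lemma IsBhSet.anti {h : ℕ} {A B : Set ℕ} (hB : IsBhSet h B) (hAB : A ⊆ B) : IsBhSet h A :=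
  fun a b ha hb hsum => hB a b (fun i => hAB (ha i)) (fun i => hAB (hb i)) hsum

/-- splitting off the copies of `x` -/
lemma msplit (x : ℕ) (s : Multiset ℕ) :
    Multiset.replicate (s.count x) x + s.filter (fun y => ¬ y = x) = s := by
  have := Multiset.filter_add_not (fun y => y = x) s
  rwa [Multiset.filter_eq'] at this

lemma cancel_aux {h : ℕ} {A : Set ℕ} (hA : IsBhSet h A) (h0 : 0 ∈ A) {x : ℕ} (hx : x ∉ A)
    {s t : Multiset ℕ} (hs : Multiset.card s = h) (ht : Multiset.card t = h)
    (hsA : ∀ y ∈ s, y ∈ insert x A) (htA : ∀ y ∈ t, y ∈ insert x A)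
    (hsum : s.sum = t.sum) (hcount : s.count x = t.count x) : s = t := by
  set j := s.count x with hj
  set s' := s.filter (fun y => ¬ y = x) with hs'
  set t' := t.filter (fun y => ¬ y = x) with ht'
  have hjh : j ≤ h := hs ▸ s.count_le_card x
  have hss : Multiset.replicate j x + s' = s := msplit x s
  have htt : Multiset.replicate j x + t' = t := by
    rw [show j = t.count x from hcount]; exact msplit x t
  have hs'A : ∀ y ∈ s', y ∈ A := by
    intro y hy
    have h1 := Multiset.of_mem_filter hy
    rcases hsA y (Multiset.mem_of_mem_filter hy) with h2 | h2
    · exact absurd h2 h1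
    · exact h2
  have ht'A : ∀ y ∈ t', y ∈ A := by
    intro y hy
    have h1 := Multiset.of_mem_filter hy
    rcases htA y (Multiset.mem_of_mem_filter hy) with h2 | h2
    · exact absurd h2 h1
    · exact h2
  have hcs : Multiset.card s' = h - j := by
    have := congrArg Multiset.card hss
    simp [Multiset.card_replicate, hs] at this
    omega
  have hct : Multiset.card t' = h - j := by
    have := congrArg Multiset.card htt
    simp [Multiset.card_replicate, ht] at this
    omega
  have hsum' : s'.sum = t'.sum := by
    have h1 : s.sum = j * x + s'.sum := by rw [← hss]; simp [Multiset.sum_replicate, mul_comm]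
    have h2 : t.sum = j * x + t'.sum := by rw [← htt]; simp [Multiset.sum_replicate, mul_comm]
    omega
  -- pad with zeros
  have key : s' + Multiset.replicate j 0 = t' + Multiset.replicate j 0 := by
    refine (isBhSet_iff h A).mp hA _ _ ?_ ?_ ?_ ?_ ?_
    · simp [hcs]; omega
    · simp [hct]; omega
    · intro y hy
      rcases Multiset.mem_add.mp hy with hy | hy
      · exact hs'A y hy
      · rw [Multiset.eq_of_mem_replicate hy]; exact h0
    · intro y hy
      rcases Multiset.mem_add.mp hy with hy | hy
      · exact ht'A y hy
      · rw [Multiset.eq_of_mem_replicate hy]; exact h0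
    · simp [hsum']
  have : s' = t' := by
    have := congrArg (fun u => u - Multiset.replicate j 0) key
    simpa using this
  rw [← hss, ← htt, this]

/-- count comparison impossible when x is large -/
lemma count_eq_aux {h : ℕ} {A : Set ℕ} {M x : ℕ} (hM : ∀ a ∈ A, a ≤ M) (hx : h * M < x)
    {s t : Multiset ℕ} (hs : Multiset.card s = h) (ht : Multiset.card t = h)
    (hsA : ∀ y ∈ s, y ∈ insert x A) (htA : ∀ y ∈ t, y ∈ insert x A)
    (hsum : s.sum = t.sum) (hcount : s.count x < t.count x) : False := by
  set j := s.count x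
  set l := t.count x
  set s' := s.filter (fun y => ¬ y = x) with hs'
  have hss : Multiset.replicate j x + s' = s := msplit x s
  have hcs : Multiset.card s' = h - j := by
    have h1 : j ≤ h := hs ▸ s.count_le_card x
    have := congrArg Multiset.card hss
    simp [Multiset.card_replicate, hs] at this
    omega
  have hs'M : s'.sum ≤ (h - j) * M := by
    calc s'.sum ≤ Multiset.card s' • M := by
          apply Multiset.sum_le_card_nsmul
          intro y hy
          have h1 := Multiset.of_mem_filter hy
          rcases hsA y (Multiset.mem_of_mem_filter hy) with h2 | h2
          · exact absurd h2 h1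
          · exact hM y h2
      _ = (h - j) * M := by rw [hcs]; simp [smul_eq_mul]
  have hsums : s.sum = j * x + s'.sum := by rw [← hss]; simp [Multiset.sum_replicate, mul_comm]
  have htsum : l * x ≤ t.sum := by
    have h2 : Multiset.replicate l x + t.filter (fun y => ¬ y = x) = t := msplit x t
    have := congrArg Multiset.sum h2
    simp [Multiset.sum_replicate] at this
    omega
  have hjh : j ≤ h := hs ▸ s.count_le_card x
  -- t.sum ≥ l*x ≥ (j+1) x > j x + h M ≥ j x + (h-j) M ≥ s.sum
  have : (h - j) * M ≤ h * M := Nat.mul_le_mul_right M (Nat.sub_le h j)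
  nlinarith [hsum, hcount]

lemma isBhSet_insert {h : ℕ} (hh : 1 ≤ h) {A : Set ℕ} {M x : ℕ} (hA : IsBhSet h A) (h0 : 0 ∈ A)
    (hM : ∀ a ∈ A, a ≤ M) (hx : h * M < x) : IsBhSet h (insert x A) := by
  have hxA : x ∉ A := by
    intro hmem
    have h1 := hM x hmem
    have h2 : M ≤ h * M := Nat.le_mul_of_pos_left M hh
    omega
  rw [isBhSet_iff]
  intro s t hs ht hsA htA hsum
  rcases lt_trichotomy (s.count x) (t.count x) with hc | hc | hc
  · exact absurd (count_eq_aux hM hx hs ht hsA htA hsum hc) id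
  · exact cancel_aux hA h0 hxA hs ht hsA htA hsum hc
  · exact absurd (count_eq_aux hM hx ht hs htA hsA hsum.symm hc) id

lemma bad_rep {h : ℕ} {A : Set ℕ} {n : ℕ} (hA : IsBhSet h A) (h0 : 0 ∈ A) (hn : n ∉ A)
    (hbad : ¬ IsBhSet h (insert n A)) :
    ∃ j l : ℕ, ∃ s t : Multiset ℕ, l < j ∧ j ≤ h ∧
      Multiset.card s = h - j ∧ Multiset.card t = h - l ∧
      (∀ x ∈ s, x ∈ A) ∧ (∀ x ∈ t, x ∈ A) ∧ (j - l) * n + s.sum = t.sum := by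
  rw [isBhSet_iff] at hbad
  push_neg at hbad
  obtain ⟨s, t, hs, ht, hsA, htA, hsum, hne⟩ := hbad
  -- wlog count n s > count n t
  have main : ∀ s t : Multiset ℕ, Multiset.card s = h → Multiset.card t = h →
      (∀ x ∈ s, x ∈ insert n A) → (∀ x ∈ t, x ∈ insert n A) → s.sum = t.sum →
      t.count n < s.count n →
      ∃ j l : ℕ, ∃ s' t' : Multiset ℕ, l < j ∧ j ≤ h ∧
        Multiset.card s' = h - j ∧ Multiset.card t' = h - l ∧
        (∀ x ∈ s', x ∈ A) ∧ (∀ x ∈ t', x ∈ A) ∧ (j - l) * n + s'.sum = t'.sum := by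
    clear hs ht hsA htA hsum hne s t
    intro s t hs ht hsA htA hsum hc
    set j := s.count n with hj
    set l := t.count n with hl
    set s' := s.filter (fun y => ¬ y = n) with hs'
    set t' := t.filter (fun y => ¬ y = n) with ht'
    have hss : Multiset.replicate j n + s' = s := msplit n s
    have htt : Multiset.replicate l n + t' = t := msplit n t
    have hjh : j ≤ h := hs ▸ s.count_le_card n
    have hlh : l ≤ h := ht ▸ t.count_le_card n
    refine ⟨j, l, s', t', hc, hjh, ?_, ?_, ?_, ?_, ?_⟩
    · have := congrArg Multiset.card hss
      simp [Multiset.card_replicate, hs] at this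
      omega
    · have := congrArg Multiset.card htt
      simp [Multiset.card_replicate, ht] at this
      omega
    · intro y hy
      have h1 := Multiset.of_mem_filter hy
      rcases hsA y (Multiset.mem_of_mem_filter hy) with h2 | h2
      · exact absurd h2 h1
      · exact h2
    · intro y hy
      have h1 := Multiset.of_mem_filter hy
      rcases htA y (Multiset.mem_of_mem_filter hy) with h2 | h2
      · exact absurd h2 h1
      · exact h2
    · have h1 : s.sum = j * n + s'.sum := by rw [← hss]; simp [Multiset.sum_replicate, mul_comm]
      have h2 : t.sum = l * n + t'.sum := by rw [← htt]; simp [Multiset.sum_replicate, mul_comm]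
      have h4 : l * n + (j - l) * n = j * n := by rw [← Nat.add_mul]; congr 1; omega
      generalize (j - l) * n = r at h4 ⊢
      generalize j * n = p at h1 h4
      generalize l * n = q at h2 h4
      omega
  rcases lt_trichotomy (t.count n) (s.count n) with hc | hc | hc
  · exact main s t hs ht hsA htA hsum hc
  · exact absurd (cancel_aux hA h0 hn hs ht hsA htA hsum hc.symm) hne
  · exact main t s ht hs htA hsA hsum.symm hc

lemma greedyAux_succ_snd (h k : ℕ) :
    (greedyAux h (k + 1)).2 = insert (greedy h (k + 1)) (greedyAux h k).2 := by
  rw [greedy, greedyAux]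

lemma greedy_zero (h : ℕ) : greedy h 0 = 0 := rfl

lemma greedyAux_zero_snd (h : ℕ) : (greedyAux h 0).2 = {0} := rfl

lemma greedy_one (h : ℕ) : greedy h 1 = 1 := by
  rw [greedy, greedyAux]
  simp

lemma greedy_succ (h k : ℕ) (hk : 1 ≤ k) : greedy h (k + 1) =
    sInf {x : ℕ | greedy h k < x ∧
      IsBhSet h ((insert x (greedyAux h k).2 : Finset ℕ) : Set ℕ)} := by
  rw [greedy, greedyAux]
  simp only []
  rw [if_neg (by omega)]
  rfl

lemma isBhSet_singleton_zero (h : ℕ) : IsBhSet h ({0} : Set ℕ) := by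
  rw [isBhSet_iff]
  intro s t hs ht hsA htA _
  have h1 : s = Multiset.replicate h 0 := by
    rw [Multiset.eq_replicate]
    exact ⟨hs, fun x hx => hsA x hx⟩
  have h2 : t = Multiset.replicate h 0 := by
    rw [Multiset.eq_replicate]
    exact ⟨ht, fun x hx => htA x hx⟩
  rw [h1, h2]

lemma greedy_struct (h : ℕ) (hh : 1 ≤ h) (k : ℕ) :
    IsBhSet h ((greedyAux h k).2 : Set ℕ) ∧ (∀ a ∈ (greedyAux h k).2, a ≤ greedy h k) ∧
      0 ∈ (greedyAux h k).2 ∧ (greedyAux h k).2.card = k + 1 := by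
  induction k with
  | zero =>
    refine ⟨?_, ?_, ?_, ?_⟩
    · rw [greedyAux_zero_snd]; simpa using isBhSet_singleton_zero h
    · intro a ha; rw [greedyAux_zero_snd] at ha; simp at ha; simp [ha, greedy_zero]
    · rw [greedyAux_zero_snd]; simp
    · rw [greedyAux_zero_snd]; simp
  | succ k ih =>
    obtain ⟨ihB, ihM, ih0, ihc⟩ := ih
    rcases Nat.eq_zero_or_pos k with rfl | hk
    · have hg1 : greedy h 1 = 1 := greedy_one h
      have hins : (greedyAux h 1).2 = insert 1 {0} := by
        rw [greedyAux_succ_snd, hg1, greedyAux_zero_snd]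
      refine ⟨?_, ?_, ?_, ?_⟩
      · rw [hins]
        have := isBhSet_insert hh (M := 0) (x := 1) (isBhSet_singleton_zero h) rfl
          (by simp) (by simp)
        simpa using this
      · intro a ha; rw [hins] at ha; simp at ha; rcases ha with rfl | rfl <;> simp [hg1]
      · rw [hins]; simp
      · rw [hins]; simp
    · -- k ≥ 1
      set S := {x : ℕ | greedy h k < x ∧
        IsBhSet h ((insert x (greedyAux h k).2 : Finset ℕ) : Set ℕ)} with hS
      have hSne : S.Nonempty := by
        refine ⟨h * greedy h k + 1, ?_, ?_⟩
        · have : greedy h k ≤ h * greedy h k := Nat.le_mul_of_pos_left _ hh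
          omega
        · rw [Finset.coe_insert]
          exact isBhSet_insert hh ihB ih0 ihM (by omega)
      have hgS : greedy h (k + 1) ∈ S := by
        rw [greedy_succ h k hk]
        exact Nat.sInf_mem hSne
      obtain ⟨hlt, hBh⟩ := hgS
      have hnotmem : greedy h (k + 1) ∉ (greedyAux h k).2 := by
        intro hmem
        have := ihM _ hmem
        omega
      refine ⟨?_, ?_, ?_, ?_⟩
      · rw [greedyAux_succ_snd, Finset.coe_insert]
        rw [Finset.coe_insert] at hBh
        exact hBh
      · intro a ha
        rw [greedyAux_succ_snd] at ha
        rcases Finset.mem_insert.mp ha with rfl | ha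
        · exact le_refl _
        · exact le_of_lt (lt_of_le_of_lt (ihM a ha) hlt)
      · rw [greedyAux_succ_snd]
        exact Finset.mem_insert_of_mem ih0
      · rw [greedyAux_succ_snd, Finset.card_insert_of_notMem hnotmem, ihc]

lemma greedy_succ_mem (h : ℕ) (hh : 1 ≤ h) (k : ℕ) (hk : 1 ≤ k) :
    greedy h k < greedy h (k + 1) ∧
      IsBhSet h ((insert (greedy h (k + 1)) (greedyAux h k).2 : Finset ℕ) : Set ℕ) := by
  obtain ⟨ihB, ihM, ih0, _⟩ := greedy_struct h hh k
  have hSne : {x : ℕ | greedy h k < x ∧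
      IsBhSet h ((insert x (greedyAux h k).2 : Finset ℕ) : Set ℕ)}.Nonempty := by
    refine ⟨h * greedy h k + 1, ?_, ?_⟩
    · have : greedy h k ≤ h * greedy h k := Nat.le_mul_of_pos_left _ hh
      omega
    · rw [Finset.coe_insert]
      exact isBhSet_insert hh ihB ih0 ihM (by omega)
  have := Nat.sInf_mem hSne
  rw [← greedy_succ h k hk] at this
  exact this

lemma greedy_lt_succ (h : ℕ) (hh : 1 ≤ h) (k : ℕ) (hk : 1 ≤ k) :
    greedy h k < greedy h (k + 1) :=
  (greedy_succ_mem h hh k hk).1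

lemma greedy_min (h : ℕ) (hh : 1 ≤ h) (k : ℕ) (hk : 1 ≤ k) (n : ℕ)
    (h1 : greedy h k < n) (h2 : n < greedy h (k + 1)) :
    ¬ IsBhSet h ((insert n (greedyAux h k).2 : Finset ℕ) : Set ℕ) := by
  intro hB
  have : n ∈ {x : ℕ | greedy h k < x ∧
      IsBhSet h ((insert x (greedyAux h k).2 : Finset ℕ) : Set ℕ)} := ⟨h1, hB⟩
  have := Nat.sInf_le this
  rw [← greedy_succ h k hk] at this
  omega

lemma greedy_gap (h : ℕ) (hh : 1 ≤ h) :
    ∀ m n : ℕ, n ≤ greedy h m → n ∉ (greedyAux h m).2 →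
      ¬ IsBhSet h ((insert n (greedyAux h m).2 : Finset ℕ) : Set ℕ) := by
  intro m
  induction m with
  | zero =>
    intro n hn hmem
    rw [greedy_zero] at hn
    interval_cases n
    exact absurd (by rw [greedyAux_zero_snd]; simp) hmem
  | succ m ih =>
    intro n hn hmem
    have hsub : (greedyAux h m).2 ⊆ (greedyAux h (m + 1)).2 := by
      rw [greedyAux_succ_snd]; exact Finset.subset_insert _ _
    have hmem' : n ∉ (greedyAux h m).2 := fun hx => hmem (hsub hx)
    rcases Nat.eq_zero_or_pos m with rfl | hm
    · -- m = 0 : n ≤ greedy h 1 = 1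
      rw [greedy_one] at hn
      exfalso
      apply hmem
      rw [greedyAux_succ_snd, greedy_one, greedyAux_zero_snd]
      interval_cases n <;> simp
    · have hne : n ≠ greedy h (m + 1) := by
        intro rfl'
        apply hmem
        rw [greedyAux_succ_snd, ← rfl']
        exact Finset.mem_insert_self _ _
      have hlt : n < greedy h (m + 1) := lt_of_le_of_ne hn hne
      have hnot : ¬ IsBhSet h ((insert n (greedyAux h m).2 : Finset ℕ) : Set ℕ) := by
        rcases le_or_gt n (greedy h m) with hle | hgt
        · exact ih n hle hmem'
        · exact greedy_min h hh m hm n hgt hlt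
      intro hB
      apply hnot
      apply hB.anti
      rw [Finset.coe_insert, Finset.coe_insert]
      exact Set.insert_subset_insert (by exact_mod_cast hsub)



lemma card_BRep (h : ℕ) (A : Finset ℕ) (p : ℕ × ℕ) :
    (BRep h A p).card ≤ (A.card + (h - p.1) - 1).choose (h - p.1) *
      (A.card + (h - p.2) - 1).choose (h - p.2) := by
  classical
  calc (BRep h A p).card ≤ (Finset.univ :
        Finset (Sym {x // x ∈ A} (h - p.1) × Sym {x // x ∈ A} (h - p.2))).card :=
      Finset.card_image_le
    _ = Fintype.card (Sym {x // x ∈ A} (h - p.1)) * Fintype.card (Sym {x // x ∈ A} (h - p.2)) := by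
      rw [Finset.card_univ, Fintype.card_prod]
    _ = _ := by
      rw [Sym.card_sym_eq_choose, Sym.card_sym_eq_choose, Fintype.card_coe]

lemma mem_BRep {h : ℕ} {A : Finset ℕ} {n j l : ℕ} {s t : Multiset ℕ}
    (hjl : l < j) (hj : j ≤ h)
    (hs : Multiset.card s = h - j) (ht : Multiset.card t = h - l)
    (hsA : ∀ x ∈ s, x ∈ A) (htA : ∀ x ∈ t, x ∈ A)
    (hsum : (j - l) * n + s.sum = t.sum) : n ∈ BRep h A (j, l) := by
  classical
  rw [BRep, Finset.mem_image]
  set σ : Sym {x // x ∈ A} (h - j) :=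
    ⟨s.attach.map (fun x => (⟨x.1, hsA x.1 x.2⟩ : {y // y ∈ A})), by simp [hs]⟩ with hσ
  set τ : Sym {x // x ∈ A} (h - l) :=
    ⟨t.attach.map (fun x => (⟨x.1, htA x.1 x.2⟩ : {y // y ∈ A})), by simp [ht]⟩ with hτ
  refine ⟨(σ, τ), Finset.mem_univ _, ?_⟩
  have hσv : Multiset.map Subtype.val (σ : Multiset {x // x ∈ A}) = s := by
    show Multiset.map Subtype.val
      (s.attach.map (fun x => (⟨x.1, hsA x.1 x.2⟩ : {y // y ∈ A}))) = s
    rw [Multiset.map_map]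
    exact s.attach_map_val
  have hτv : Multiset.map Subtype.val (τ : Multiset {x // x ∈ A}) = t := by
    show Multiset.map Subtype.val
      (t.attach.map (fun x => (⟨x.1, htA x.1 x.2⟩ : {y // y ∈ A}))) = t
    rw [Multiset.map_map]
    exact t.attach_map_val
  simp only [hσv, hτv]
  have h1 : t.sum - s.sum = (j - l) * n := by omega
  rw [h1, Nat.mul_div_cancel_left _ (by omega : 0 < j - l)]

lemma greedy_nat_bound (h : ℕ) (hh : 1 ≤ h) (m : ℕ) :
    greedy h m ≤ m + ∑ p ∈ PJL h,
      (m + (h - p.1)).choose (h - p.1) * (m + (h - p.2)).choose (h - p.2) := by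
  classical
  obtain ⟨hB, hM, h0, hc⟩ := greedy_struct h hh m
  set A := (greedyAux h m).2 with hA
  set Bad := (Finset.range (greedy h m + 1)) \ A with hBad
  have hsub : Bad ⊆ (PJL h).biUnion (BRep h A) := by
    intro n hn
    rw [hBad, Finset.mem_sdiff, Finset.mem_range] at hn
    obtain ⟨hn1, hn2⟩ := hn
    have hgap := greedy_gap h hh m n (by omega) hn2
    rw [Finset.coe_insert] at hgap
    have hnA : n ∉ (A : Set ℕ) := by simpa using hn2
    obtain ⟨j, l, s, t, hjl, hj, hs, ht, hsA, htA, hsum⟩ := bad_rep hB h0 hnA hgap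
    apply Finset.mem_biUnion.mpr
    refine ⟨(j, l), ?_, mem_BRep hjl hj hs ht (fun x hx => by exact_mod_cast hsA x hx)
      (fun x hx => by exact_mod_cast htA x hx) hsum⟩
    rw [PJL, Finset.mem_filter, Finset.mem_product, Finset.mem_range, Finset.mem_range]
    exact ⟨⟨by omega, by omega⟩, hjl⟩
  have hcov : Finset.range (greedy h m + 1) ⊆ A ∪ Bad := by
    intro n hn
    by_cases hnA : n ∈ A
    · exact Finset.mem_union_left _ hnA
    · exact Finset.mem_union_right _ (Finset.mem_sdiff.mpr ⟨hn, hnA⟩)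
  have h1 : greedy h m + 1 ≤ (m + 1) + Bad.card := by
    calc greedy h m + 1 = (Finset.range (greedy h m + 1)).card := by rw [Finset.card_range]
      _ ≤ (A ∪ Bad).card := Finset.card_le_card hcov
      _ ≤ A.card + Bad.card := Finset.card_union_le _ _
      _ = (m + 1) + Bad.card := by rw [hc]
  have h2 : Bad.card ≤ ∑ p ∈ PJL h,
      (m + (h - p.1)).choose (h - p.1) * (m + (h - p.2)).choose (h - p.2) := by
    calc Bad.card ≤ ((PJL h).biUnion (BRep h A)).card := Finset.card_le_card hsub
      _ ≤ ∑ p ∈ PJL h, (BRep h A p).card := Finset.card_biUnion_le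
      _ ≤ _ := by
        apply Finset.sum_le_sum
        intro p hp
        have := card_BRep h A p
        rw [hc] at this
        have e1 : m + 1 + (h - p.1) - 1 = m + (h - p.1) := by omega
        have e2 : m + 1 + (h - p.2) - 1 = m + (h - p.2) := by omega
        rwa [e1, e2] at this
  omega

/- ### h = 1 -/

lemma isBhSet_one (A : Set ℕ) : IsBhSet 1 A := by
  intro a b _ _ hsum
  rw [Fin.sum_univ_one, Fin.sum_univ_one] at hsum
  have : a = b := funext fun i => by rw [Subsingleton.elim i 0, hsum]
  rw [this]

lemma greedy_one_eq (m : ℕ) : greedy 1 m = m := by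
  induction m with
  | zero => rfl
  | succ k ih =>
    rcases Nat.eq_zero_or_pos k with rfl | hk
    · exact greedy_one 1
    · rw [greedy_succ 1 k hk, ih]
      have hmem : (k + 1) ∈ {x : ℕ | k < x ∧
          IsBhSet 1 ((insert x (greedyAux 1 k).2 : Finset ℕ) : Set ℕ)} :=
        ⟨Nat.lt_succ_self k, isBhSet_one _⟩
      apply le_antisymm (Nat.sInf_le hmem)
      obtain ⟨h1, -⟩ := Nat.sInf_mem (⟨k + 1, hmem⟩ : Set.Nonempty _)
      omega

/- ### real estimates -/

lemma pow_add_le (x : ℝ) (hx : 1 ≤ x) (c : ℕ) : ∀ n : ℕ,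
    (x + c) ^ n ≤ x ^ n + (((c : ℝ) + 1) ^ n - 1) * x ^ (n - 1)
  | 0 => by simp
  | 1 => by simp
  | (n + 2) => by
    have hx0 : (0 : ℝ) ≤ x := by linarith
    have hc0 : (0 : ℝ) ≤ c := Nat.cast_nonneg c
    have ih := pow_add_le x hx c (n + 1)
    have hK : (0 : ℝ) ≤ ((c : ℝ) + 1) ^ (n + 1) - 1 := by
      have : (1 : ℝ) ≤ ((c : ℝ) + 1) ^ (n + 1) := one_le_pow₀ (by linarith)
      linarith
    have hstep : (x + c) ^ (n + 2) = (x + c) ^ (n + 1) * (x + c) := by ring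
    rw [hstep]
    have h1 : (x + c) ^ (n + 1) * (x + c) ≤
        (x ^ (n + 1) + (((c : ℝ) + 1) ^ (n + 1) - 1) * x ^ n) * (x + c) := by
      apply mul_le_mul_of_nonneg_right _ (by linarith)
      simpa using ih
    refine h1.trans ?_
    have hxn : x ^ n * x = x ^ (n + 1) := by ring
    have hxle : x ^ n ≤ x ^ (n + 1) := by
      calc x ^ n = x ^ n * 1 := by ring
        _ ≤ x ^ n * x := by nlinarith [pow_nonneg hx0 n]
        _ = x ^ (n + 1) := hxn
    have expand : (x ^ (n + 1) + (((c : ℝ) + 1) ^ (n + 1) - 1) * x ^ n) * (x + c)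
        = x ^ (n + 2) + (c : ℝ) * x ^ (n + 1) + (((c : ℝ) + 1) ^ (n + 1) - 1) * x ^ (n + 1)
          + (c : ℝ) * ((((c : ℝ) + 1) ^ (n + 1) - 1) * x ^ n) := by ring
    rw [expand]
    have goalK : ((c : ℝ) + 1) ^ (n + 2) - 1
        = (c : ℝ) + (((c : ℝ) + 1) ^ (n + 1) - 1) + (c : ℝ) * (((c : ℝ) + 1) ^ (n + 1) - 1) := by
      ring
    have hsub : (n + 2) - 1 = n + 1 := by omega
    rw [hsub, goalK]
    have t1 : (c : ℝ) * ((((c : ℝ) + 1) ^ (n + 1) - 1) * x ^ n)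
        ≤ (c : ℝ) * (((c : ℝ) + 1) ^ (n + 1) - 1) * x ^ (n + 1) := by
      rw [mul_assoc]
      apply mul_le_mul_of_nonneg_left _ hc0
      exact mul_le_mul_of_nonneg_left hxle hK
    nlinarith [pow_nonneg hx0 (n+1)]

theorem greedy_real_bound (h : ℕ) (hh : 2 ≤ h) :
    ∃ C : ℝ, ∀ k : ℕ, 1 ≤ k →
      (greedy h k : ℝ) ≤ (k : ℝ) ^ (2 * h - 1) / (Nat.factorial h * Nat.factorial (h - 1))
        + C * (k : ℝ) ^ (2 * h - 2) := by
  refine ⟨1 + ((h:ℝ)+1)^(2*h-1) + ((h:ℝ)+1)^2 * ((h:ℝ)+1)^(2*h-2), ?_⟩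
  intro m hm
  have hh1 : 1 ≤ h := by omega
  have hm1 : (1:ℝ) ≤ (m:ℝ) := by exact_mod_cast hm
  have hmh1 : (1:ℝ) ≤ ((m:ℝ) + (h:ℝ)) := by
    have : (0:ℝ) ≤ (h:ℝ) := Nat.cast_nonneg h
    linarith
  set D : ℝ := (Nat.factorial h : ℝ) * (Nat.factorial (h-1) : ℝ) with hD
  have hD1 : 1 ≤ D := by
    rw [hD]
    have f1 : 1 ≤ Nat.factorial h := Nat.one_le_iff_ne_zero.mpr (Nat.factorial_ne_zero h)
    have f2 : 1 ≤ Nat.factorial (h-1) := Nat.one_le_iff_ne_zero.mpr (Nat.factorial_ne_zero _)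
    have : (1:ℝ) ≤ (Nat.factorial h : ℝ) := by exact_mod_cast f1
    have : (1:ℝ) ≤ (Nat.factorial (h-1) : ℝ) := by exact_mod_cast f2
    nlinarith
  have hD0 : 0 < D := by linarith
  -- the nat bound, cast to ℝ
  have b1 : (greedy h m : ℝ) ≤ (m:ℝ) + ∑ p ∈ PJL h,
      ((m + (h - p.1)).choose (h - p.1) * (m + (h - p.2)).choose (h - p.2) : ℕ) := by
    exact_mod_cast greedy_nat_bound h hh1 m
  -- split off the (1,0) term
  have hmem10 : ((1:ℕ), (0:ℕ)) ∈ PJL h := by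
    rw [PJL, Finset.mem_filter, Finset.mem_product, Finset.mem_range, Finset.mem_range]
    exact ⟨⟨by omega, by omega⟩, by norm_num⟩
  have hsplit : ∑ p ∈ PJL h,
      (((m + (h - p.1)).choose (h - p.1) * (m + (h - p.2)).choose (h - p.2) : ℕ) : ℝ)
      = (((m + (h - 1)).choose (h - 1) * (m + h).choose h : ℕ) : ℝ)
        + ∑ p ∈ (PJL h).erase ((1:ℕ), (0:ℕ)),
          (((m + (h - p.1)).choose (h - p.1) * (m + (h - p.2)).choose (h - p.2) : ℕ) : ℝ) := by
    rw [← Finset.add_sum_erase _ _ hmem10]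
    norm_num
  -- main term bound
  have main : (((m + (h - 1)).choose (h - 1) * (m + h).choose h : ℕ) : ℝ)
      ≤ (m:ℝ) ^ (2*h-1) / D + ((h:ℝ)+1)^(2*h-1) * (m:ℝ)^(2*h-2) := by
    have c1 : (((m + (h - 1)).choose (h - 1) : ℕ) : ℝ)
        ≤ ((m + h : ℕ) : ℝ) ^ (h-1) / (Nat.factorial (h-1) : ℝ) := by
      calc (((m + (h - 1)).choose (h - 1) : ℕ) : ℝ)
          ≤ (((m + h).choose (h - 1) : ℕ) : ℝ) := by
            exact_mod_cast Nat.choose_le_choose (h-1) (by omega : m + (h-1) ≤ m + h)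
        _ ≤ _ := Nat.choose_le_pow_div (h-1) (m+h)
    have c2 : (((m + h).choose h : ℕ) : ℝ)
        ≤ ((m + h : ℕ) : ℝ) ^ h / (Nat.factorial h : ℝ) := Nat.choose_le_pow_div h (m+h)
    have cprod : (((m + (h - 1)).choose (h - 1) * (m + h).choose h : ℕ) : ℝ)
        ≤ ((m + h : ℕ) : ℝ) ^ (2*h-1) / D := by
      push_cast
      have e1 : ((m:ℝ) + (h:ℝ)) ^ (h-1) / (Nat.factorial (h-1) : ℝ)
          * (((m:ℝ) + (h:ℝ)) ^ h / (Nat.factorial h : ℝ))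
          = ((m:ℝ) + (h:ℝ)) ^ (2*h-1) / D := by
        rw [hD, div_mul_div_comm, ← pow_add]
        congr 1
        · congr 1
          omega
        · ring
      have c1' : (((m + (h - 1)).choose (h - 1) : ℕ) : ℝ)
          ≤ ((m:ℝ) + (h:ℝ)) ^ (h-1) / (Nat.factorial (h-1) : ℝ) := by
        have := c1; push_cast at this; exact this
      have c2' : (((m + h).choose h : ℕ) : ℝ)
          ≤ ((m:ℝ) + (h:ℝ)) ^ h / (Nat.factorial h : ℝ) := by
        have := c2; push_cast at this; exact this
      calc (((m + (h - 1)).choose (h - 1) : ℕ) : ℝ) * (((m + h).choose h : ℕ) : ℝ)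
          ≤ ((m:ℝ) + (h:ℝ)) ^ (h-1) / (Nat.factorial (h-1) : ℝ)
            * (((m:ℝ) + (h:ℝ)) ^ h / (Nat.factorial h : ℝ)) := by
            apply mul_le_mul c1' c2' (by positivity) (by positivity)
        _ = _ := e1
    have p1 : ((m + h : ℕ) : ℝ) ^ (2*h-1)
        ≤ (m:ℝ)^(2*h-1) + (((h:ℝ)+1)^(2*h-1) - 1) * (m:ℝ)^(2*h-2) := by
      have := pow_add_le (m:ℝ) hm1 h (2*h-1)
      have e : (2*h-1) - 1 = 2*h-2 := by omega
      rw [e] at this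
      push_cast
      exact this
    calc (((m + (h - 1)).choose (h - 1) * (m + h).choose h : ℕ) : ℝ)
        ≤ ((m + h : ℕ) : ℝ) ^ (2*h-1) / D := cprod
      _ ≤ ((m:ℝ)^(2*h-1) + (((h:ℝ)+1)^(2*h-1) - 1) * (m:ℝ)^(2*h-2)) / D := by
          gcongr
      _ ≤ (m:ℝ) ^ (2*h-1) / D + ((h:ℝ)+1)^(2*h-1) * (m:ℝ)^(2*h-2) := by
          rw [add_div]
          have hK : (0:ℝ) ≤ (((h:ℝ)+1)^(2*h-1) - 1) * (m:ℝ)^(2*h-2) := by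
            have : (1:ℝ) ≤ ((h:ℝ)+1)^(2*h-1) := one_le_pow₀ (by linarith [Nat.cast_nonneg (α := ℝ) h])
            have := pow_nonneg (by linarith : (0:ℝ) ≤ (m:ℝ)) (2*h-2)
            nlinarith
          have h2 : (((h:ℝ)+1)^(2*h-1) - 1) * (m:ℝ)^(2*h-2) / D
              ≤ (((h:ℝ)+1)^(2*h-1) - 1) * (m:ℝ)^(2*h-2) := by
            apply div_le_self hK hD1
          have h3 : (((h:ℝ)+1)^(2*h-1) - 1) * (m:ℝ)^(2*h-2)
              ≤ ((h:ℝ)+1)^(2*h-1) * (m:ℝ)^(2*h-2) := by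
            have := pow_nonneg (by linarith : (0:ℝ) ≤ (m:ℝ)) (2*h-2)
            nlinarith
          linarith
  -- rest bound
  have rest : ∑ p ∈ (PJL h).erase ((1:ℕ), (0:ℕ)),
      (((m + (h - p.1)).choose (h - p.1) * (m + (h - p.2)).choose (h - p.2) : ℕ) : ℝ)
      ≤ ((h:ℝ)+1)^2 * ((h:ℝ)+1)^(2*h-2) * (m:ℝ)^(2*h-2) := by
    have hterm : ∀ p ∈ (PJL h).erase ((1:ℕ), (0:ℕ)),
        (((m + (h - p.1)).choose (h - p.1) * (m + (h - p.2)).choose (h - p.2) : ℕ) : ℝ)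
        ≤ ((h:ℝ)+1)^(2*h-2) * (m:ℝ)^(2*h-2) := by
      intro p hp
      have hp' := Finset.mem_of_mem_erase hp
      have hpne := Finset.ne_of_mem_erase hp
      rw [PJL, Finset.mem_filter, Finset.mem_product, Finset.mem_range, Finset.mem_range] at hp'
      obtain ⟨⟨hp1, hp2⟩, hp3⟩ := hp'
      have hsum2 : 2 ≤ p.1 + p.2 := by
        rcases Nat.lt_or_ge p.1 2 with hlt | hge
        · exfalso
          apply hpne
          have : p.1 = 1 := by omega
          have : p.2 = 0 := by omega
          ext <;> simp_all
        · omega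
      -- nat bound
      have nat1 : (m + (h - p.1)).choose (h - p.1) * (m + (h - p.2)).choose (h - p.2)
          ≤ (m + h) ^ (2*h-2) := by
        calc (m + (h - p.1)).choose (h - p.1) * (m + (h - p.2)).choose (h - p.2)
            ≤ (m + (h - p.1)) ^ (h - p.1) * (m + (h - p.2)) ^ (h - p.2) :=
              Nat.mul_le_mul (Nat.choose_le_pow _ _) (Nat.choose_le_pow _ _)
          _ ≤ (m + h) ^ (h - p.1) * (m + h) ^ (h - p.2) :=
              Nat.mul_le_mul (Nat.pow_le_pow_left (by omega) _) (Nat.pow_le_pow_left (by omega) _)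
          _ = (m + h) ^ ((h - p.1) + (h - p.2)) := by rw [pow_add]
          _ ≤ (m + h) ^ (2*h-2) := Nat.pow_le_pow_right (by omega) (by omega)
      have cast1 : (((m + (h - p.1)).choose (h - p.1) * (m + (h - p.2)).choose (h - p.2) : ℕ) : ℝ)
          ≤ ((m:ℝ) + (h:ℝ)) ^ (2*h-2) := by
        have : (((m + (h - p.1)).choose (h - p.1) * (m + (h - p.2)).choose (h - p.2) : ℕ) : ℝ)
            ≤ (((m + h) ^ (2*h-2) : ℕ) : ℝ) := by exact_mod_cast nat1
        refine this.trans ?_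
        push_cast
        exact le_refl _
      refine cast1.trans ?_
      have hmh : (m:ℝ) + (h:ℝ) ≤ ((h:ℝ)+1) * (m:ℝ) := by nlinarith [Nat.cast_nonneg (α := ℝ) h]
      calc ((m:ℝ) + (h:ℝ)) ^ (2*h-2) ≤ (((h:ℝ)+1) * (m:ℝ)) ^ (2*h-2) := by
            apply pow_le_pow_left₀ (by linarith) hmh
        _ = ((h:ℝ)+1)^(2*h-2) * (m:ℝ)^(2*h-2) := mul_pow _ _ _
    calc ∑ p ∈ (PJL h).erase ((1:ℕ), (0:ℕ)),
        (((m + (h - p.1)).choose (h - p.1) * (m + (h - p.2)).choose (h - p.2) : ℕ) : ℝ)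
        ≤ ((PJL h).erase ((1:ℕ), (0:ℕ))).card • (((h:ℝ)+1)^(2*h-2) * (m:ℝ)^(2*h-2)) :=
          Finset.sum_le_card_nsmul _ _ _ hterm
      _ ≤ ((h:ℝ)+1)^2 * ((h:ℝ)+1)^(2*h-2) * (m:ℝ)^(2*h-2) := by
          rw [nsmul_eq_mul]
          have hcard : (((PJL h).erase ((1:ℕ), (0:ℕ))).card : ℝ) ≤ ((h:ℝ)+1)^2 := by
            have t1 : ((PJL h).erase ((1:ℕ), (0:ℕ))).card ≤ (PJL h).card :=
              Finset.card_le_card (Finset.erase_subset _ _)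
            have t2 : (PJL h).card ≤ (h+1) * (h+1) := by
              rw [PJL]
              calc (((Finset.range (h+1)) ×ˢ (Finset.range (h+1))).filter
                    (fun p => p.2 < p.1)).card
                  ≤ ((Finset.range (h+1)) ×ˢ (Finset.range (h+1))).card :=
                    Finset.card_filter_le _ _
                _ = (h+1) * (h+1) := by rw [Finset.card_product, Finset.card_range]
            have t4 := (Nat.cast_le (α := ℝ)).mpr (le_trans t1 t2)
            refine t4.trans (le_of_eq ?_)
            push_cast
            ring
          have hpos : (0:ℝ) ≤ ((h:ℝ)+1)^(2*h-2) * (m:ℝ)^(2*h-2) := by positivity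
          nlinarith
  -- m ≤ m ^ (2h-2)
  have hmle : (m:ℝ) ≤ (m:ℝ)^(2*h-2) := by
    calc (m:ℝ) = (m:ℝ)^1 := (pow_one _).symm
      _ ≤ (m:ℝ)^(2*h-2) := pow_le_pow_right₀ hm1 (by omega)
  rw [Nat.cast_sum] at b1
  rw [hsplit] at b1
  have hfin : (greedy h m : ℝ) ≤ (m:ℝ) + ((m:ℝ) ^ (2*h-1) / D + ((h:ℝ)+1)^(2*h-1) * (m:ℝ)^(2*h-2))
      + ((h:ℝ)+1)^2 * ((h:ℝ)+1)^(2*h-2) * (m:ℝ)^(2*h-2) := by linarith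
  linarith

theorem stmt_9 (h : ℕ) (hh : 1 ≤ h) :
    ∃ C : ℝ, ∀ k : ℕ, 1 ≤ k →
      (greedy h k : ℝ) ≤ (k : ℝ) ^ (2 * h - 1) / (Nat.factorial h * Nat.factorial (h - 1))
        + C * (k : ℝ) ^ (2 * h - 2) := by
  rcases eq_or_lt_of_le hh with heq | hlt
  · refine ⟨0, ?_⟩
    intro k hk
    rw [← heq, greedy_one_eq]
    norm_num [Nat.factorial]
  · exact greedy_real_bound h hlt
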